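/- Let (a_ℓ)_{ℓ∈ℕ₀} and (b_ℓ)_{ℓ∈ℕ₀} be sequences of nonnegative real numbers and let 0 < q < 1, 0 < δ < 1, and C₁, C₂ > 0 be constants such that, for all ℓ, N ∈ ℕ₀: (i) a_{ℓ+1} ≤ q·a_ℓ + b_ℓ, (ii) b_{ℓ+N} ≤ C₁·a_ℓ, and (iii) ∑_{ℓ'=ℓ}^{ℓ+N} b_{ℓ'}² ≤ C₂·(N+1)^{1−δ}·a_ℓ². Then (a_ℓ) is R-linearly convergent, i.e., there exist constants C_lin > 0 and 0 < q_lin < 1 such that a_{ℓ+n} ≤ C_lin·q_lin^n·a_ℓ for all ℓ, n ∈ ℕ₀. -/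

import Mathlib

open Finset

private lemma geom_range_le {q : ℝ} (hq0 : 0 ≤ q) (hq1 : q < 1) (n : ℕ) :
    ∑ k ∈ Finset.range n, q ^ k ≤ (1 - q)⁻¹ := by
  have h1q : 0 < 1 - q := by linarith
  have hqn : 0 ≤ q ^ n := pow_nonneg hq0 n
  have hqn1 : q ^ n ≤ 1 := pow_le_one₀ hq0 hq1.le
  rw [geom_sum_eq (by linarith : q ≠ 1) n]
  rw [div_le_iff_of_neg (by linarith : q - 1 < 0)]
  nlinarith [mul_pos h1q (inv_pos.mpr h1q), mul_inv_cancel₀ (ne_of_gt h1q)]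

private lemma geom_Ico_le {q : ℝ} (hq0 : 0 ≤ q) (hq1 : q < 1) (i N : ℕ) :
    ∑ n ∈ Finset.Ico (i + 1) (N + 1), q ^ (n - 1 - i) ≤ (1 - q)⁻¹ := by
  rw [Finset.sum_Ico_eq_sum_range]
  calc ∑ k ∈ Finset.range (N + 1 - (i + 1)), q ^ (i + 1 + k - 1 - i)
      ≤ ∑ k ∈ Finset.range (N + 1 - (i + 1)), q ^ k := by
        apply le_of_eq; apply Finset.sum_congr rfl; intro k _; congr 1; omega
    _ ≤ (1 - q)⁻¹ := geom_range_le hq0 hq1 _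

set_option maxHeartbeats 1000000 in
/-- Tail summability criterion for R-linear convergence
(Lemma `summability:criterion`). -/
theorem tail_summability_criterion
    (a b : ℕ → ℝ) (ha : ∀ ℓ, 0 ≤ a ℓ) (hb : ∀ ℓ, 0 ≤ b ℓ)
    (q δ C₁ C₂ : ℝ)
    (hq0 : 0 < q) (hq1 : q < 1) (hδ0 : 0 < δ) (hδ1 : δ < 1)
    (hC₁ : 0 < C₁) (hC₂ : 0 < C₂)
    (h1 : ∀ ℓ : ℕ, a (ℓ + 1) ≤ q * a ℓ + b ℓ)
    (h2 : ∀ ℓ N : ℕ, b (ℓ + N) ≤ C₁ * a ℓ)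
    (h3 : ∀ ℓ N : ℕ,
      ∑ i ∈ Finset.range (N + 1), (b (ℓ + i)) ^ 2
        ≤ C₂ * ((N : ℝ) + 1) ^ (1 - δ) * (a ℓ) ^ 2) :
    ∃ Clin qlin : ℝ, 0 < Clin ∧ 0 < qlin ∧ qlin < 1 ∧
      ∀ ℓ n : ℕ, a (ℓ + n) ≤ Clin * qlin ^ n * a ℓ := by
  have h1q : 0 < 1 - q := by linarith
  set K : ℝ := 1 + C₁ / (1 - q) with hK
  have hK1 : 1 ≤ K := by
    have : 0 < C₁ / (1 - q) := div_pos hC₁ h1q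
    simp [hK]; linarith
  have hK0 : 0 < K := lt_of_lt_of_le one_pos hK1
  -- Step 1: uniform bound
  have hbound : ∀ ℓ n : ℕ, a (ℓ + n) ≤ K * a ℓ := by
    intro ℓ n
    induction n with
    | zero => simpa using le_mul_of_one_le_left (ha ℓ) hK1
    | succ n ih =>
      have hstep : a (ℓ + (n + 1)) ≤ q * a (ℓ + n) + b (ℓ + n) := h1 (ℓ + n)
      have hb2 : b (ℓ + n) ≤ C₁ * a ℓ := h2 ℓ n
      have hqK : q * K + C₁ ≤ K := by
        rw [hK]
        have hne : (1 - q) ≠ 0 := ne_of_gt h1q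
        field_simp
        nlinarith [mul_pos (mul_pos h1q h1q) h1q]
      have : q * a (ℓ + n) ≤ q * (K * a ℓ) := mul_le_mul_of_nonneg_left ih hq0.le
      nlinarith [mul_le_mul_of_nonneg_right hqK (ha ℓ)]
  -- Step 2: iterated recursion
  have hiter : ∀ ℓ n : ℕ,
      a (ℓ + n) ≤ q ^ n * a ℓ + ∑ i ∈ Finset.range n, q ^ (n - 1 - i) * b (ℓ + i) := by
    intro ℓ n
    induction n with
    | zero => simp
    | succ n ih =>
      have hstep : a (ℓ + (n + 1)) ≤ q * a (ℓ + n) + b (ℓ + n) := h1 (ℓ + n)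
      have h4 : q * a (ℓ + n) ≤
          q * (q ^ n * a ℓ + ∑ i ∈ Finset.range n, q ^ (n - 1 - i) * b (ℓ + i)) :=
        mul_le_mul_of_nonneg_left ih hq0.le
      have hrw : q * (q ^ n * a ℓ + ∑ i ∈ Finset.range n, q ^ (n - 1 - i) * b (ℓ + i))
            + b (ℓ + n)
          = q ^ (n + 1) * a ℓ + ∑ i ∈ Finset.range (n + 1), q ^ (n + 1 - 1 - i) * b (ℓ + i) := by
        rw [Finset.sum_range_succ, mul_add, Finset.mul_sum]
        have hterm : ∀ i ∈ Finset.range n,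
            q * (q ^ (n - 1 - i) * b (ℓ + i)) = q ^ (n + 1 - 1 - i) * b (ℓ + i) := by
          intro i hi
          rw [Finset.mem_range] at hi
          rw [← mul_assoc, ← pow_succ']
          congr 2
          omega
        rw [Finset.sum_congr rfl hterm]
        have : n + 1 - 1 - n = 0 := by omega
        rw [this, pow_zero, pow_succ]
        ring
      linarith [hrw ▸ (add_le_add h4 (le_refl (b (ℓ + n))))]
  -- Step 3: squared bound
  have hsq : ∀ ℓ n : ℕ, (a (ℓ + n)) ^ 2 ≤ 2 * q ^ n * (a ℓ) ^ 2
      + 2 * (1 - q)⁻¹ * ∑ i ∈ Finset.range n, q ^ (n - 1 - i) * (b (ℓ + i)) ^ 2 := by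
    intro ℓ n
    set S := ∑ i ∈ Finset.range n, q ^ (n - 1 - i) * b (ℓ + i) with hS
    set T := ∑ i ∈ Finset.range n, q ^ (n - 1 - i) * (b (ℓ + i)) ^ 2 with hT
    have hS0 : 0 ≤ S := Finset.sum_nonneg fun i _ => mul_nonneg (pow_nonneg hq0.le _) (hb _)
    have hT0 : 0 ≤ T := Finset.sum_nonneg fun i _ => mul_nonneg (pow_nonneg hq0.le _) (sq_nonneg _)
    have hA : (a (ℓ + n)) ^ 2 ≤ (q ^ n * a ℓ + S) ^ 2 := by
      apply pow_le_pow_left₀ (ha _) (hiter ℓ n)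
    have hCS : S ^ 2 ≤ (∑ i ∈ Finset.range n, q ^ (n - 1 - i)) * T := by
      apply Finset.sum_sq_le_sum_mul_sum_of_sq_eq_mul
      · intro i _; exact pow_nonneg hq0.le _
      · intro i _; exact mul_nonneg (pow_nonneg hq0.le _) (sq_nonneg _)
      · intro i _; ring
    have hgeo : (∑ i ∈ Finset.range n, q ^ (n - 1 - i)) ≤ (1 - q)⁻¹ := by
      rw [Finset.sum_range_reflect]
      exact geom_range_le hq0.le hq1 n
    have hCS' : S ^ 2 ≤ (1 - q)⁻¹ * T :=
      hCS.trans (mul_le_mul_of_nonneg_right hgeo hT0)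
    have hq2n : (q ^ n) ^ 2 ≤ q ^ n := by
      calc (q ^ n) ^ 2 = q ^ n * q ^ n := sq (q ^ n) ▸ rfl
        _ ≤ 1 * q ^ n := by
            apply mul_le_mul_of_nonneg_right (pow_le_one₀ hq0.le hq1.le) (pow_nonneg hq0.le n)
        _ = q ^ n := one_mul _
    nlinarith [sq_nonneg (q ^ n * a ℓ - S), sq_nonneg (a ℓ), pow_nonneg hq0.le n,
      mul_le_mul_of_nonneg_right hq2n (sq_nonneg (a ℓ))]
  -- Step 4: sum of squares growth
  have hinv0 : (0:ℝ) < (1 - q)⁻¹ := inv_pos.mpr h1q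
  set C₃ : ℝ := 2 * (1 - q)⁻¹ + 2 * (1 - q)⁻¹ * ((1 - q)⁻¹ * C₂) with hC₃def
  have hC₃0 : 0 < C₃ := by positivity
  have hsum : ∀ ℓ N : ℕ, ∑ n ∈ Finset.range (N + 1), (a (ℓ + n)) ^ 2
      ≤ C₃ * ((N : ℝ) + 1) ^ (1 - δ) * (a ℓ) ^ 2 := by
    intro ℓ N
    have hrp1 : (1:ℝ) ≤ ((N : ℝ) + 1) ^ (1 - δ) := by
      apply Real.one_le_rpow (by simp [Nat.cast_nonneg] : (1:ℝ) ≤ (N:ℝ) + 1) (by linarith)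
    have hrp0 : (0:ℝ) ≤ ((N : ℝ) + 1) ^ (1 - δ) := by linarith
    have hD : ∑ n ∈ Finset.range (N + 1), ∑ i ∈ Finset.range n, q ^ (n - 1 - i) * (b (ℓ + i)) ^ 2
        ≤ (1 - q)⁻¹ * (C₂ * ((N : ℝ) + 1) ^ (1 - δ) * (a ℓ) ^ 2) := by
      have hswap : ∑ n ∈ Finset.range (N + 1), ∑ i ∈ Finset.range n,
            q ^ (n - 1 - i) * (b (ℓ + i)) ^ 2
          = ∑ i ∈ Finset.Ico 0 (N + 1), ∑ n ∈ Finset.Ico (i + 1) (N + 1),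
            q ^ (n - 1 - i) * (b (ℓ + i)) ^ 2 := by
        simp only [Finset.range_eq_Ico]
        rw [Finset.sum_Ico_Ico_comm' 0 (N + 1) (fun i j => q ^ (j - 1 - i) * (b (ℓ + i)) ^ 2)]
      rw [hswap]
      calc ∑ i ∈ Finset.Ico 0 (N + 1), ∑ n ∈ Finset.Ico (i + 1) (N + 1),
              q ^ (n - 1 - i) * (b (ℓ + i)) ^ 2
          ≤ ∑ i ∈ Finset.Ico 0 (N + 1), (1 - q)⁻¹ * (b (ℓ + i)) ^ 2 := by
            apply Finset.sum_le_sum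
            intro i _
            rw [← Finset.sum_mul]
            exact mul_le_mul_of_nonneg_right (geom_Ico_le hq0.le hq1 i N) (sq_nonneg _)
        _ = (1 - q)⁻¹ * ∑ i ∈ Finset.range (N + 1), (b (ℓ + i)) ^ 2 := by
            rw [← Finset.range_eq_Ico, Finset.mul_sum]
        _ ≤ (1 - q)⁻¹ * (C₂ * ((N : ℝ) + 1) ^ (1 - δ) * (a ℓ) ^ 2) :=
            mul_le_mul_of_nonneg_left (h3 ℓ N) hinv0.le
    calc ∑ n ∈ Finset.range (N + 1), (a (ℓ + n)) ^ 2
        ≤ ∑ n ∈ Finset.range (N + 1), (2 * q ^ n * (a ℓ) ^ 2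
            + 2 * (1 - q)⁻¹ * ∑ i ∈ Finset.range n, q ^ (n - 1 - i) * (b (ℓ + i)) ^ 2) :=
          Finset.sum_le_sum fun n _ => hsq ℓ n
      _ = 2 * (a ℓ) ^ 2 * (∑ n ∈ Finset.range (N + 1), q ^ n)
          + 2 * (1 - q)⁻¹ * ∑ n ∈ Finset.range (N + 1), ∑ i ∈ Finset.range n,
              q ^ (n - 1 - i) * (b (ℓ + i)) ^ 2 := by
          rw [Finset.sum_add_distrib, Finset.mul_sum, Finset.mul_sum]
          congr 1
          apply Finset.sum_congr rfl
          intro n _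
          ring
      _ ≤ 2 * (a ℓ) ^ 2 * (1 - q)⁻¹
          + 2 * (1 - q)⁻¹ * ((1 - q)⁻¹ * (C₂ * ((N : ℝ) + 1) ^ (1 - δ) * (a ℓ) ^ 2)) := by
          apply add_le_add
          · exact mul_le_mul_of_nonneg_left (geom_range_le hq0.le hq1 (N + 1)) (by positivity)
          · exact mul_le_mul_of_nonneg_left hD (by positivity)
      _ ≤ C₃ * ((N : ℝ) + 1) ^ (1 - δ) * (a ℓ) ^ 2 := by
          rw [hC₃def]
          have key : 2 * (a ℓ) ^ 2 * (1 - q)⁻¹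
              ≤ 2 * (1 - q)⁻¹ * (((N : ℝ) + 1) ^ (1 - δ) * (a ℓ) ^ 2) := by
            have h' : (a ℓ) ^ 2 * 1 ≤ (a ℓ) ^ 2 * ((N : ℝ) + 1) ^ (1 - δ) :=
              mul_le_mul_of_nonneg_left hrp1 (sq_nonneg _)
            nlinarith [hinv0.le]
          nlinarith [key]
  -- Step 5: choose N large
  obtain ⟨m, hm⟩ := exists_nat_gt ((8 * K ^ 2 * C₃) ^ δ⁻¹)
  set N : ℕ := m + 1 with hNdef
  have hN1 : 1 ≤ N := Nat.le_add_left 1 m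
  have hNR : (1:ℝ) ≤ (N:ℝ) := by exact_mod_cast hN1
  have hNpos : (0:ℝ) < (N:ℝ) := by linarith
  have hX0 : (0:ℝ) ≤ 8 * K ^ 2 * C₃ := by positivity
  have hNp1 : (0:ℝ) < (N:ℝ) + 1 := by positivity
  have h8 : 8 * K ^ 2 * C₃ ≤ ((N:ℝ) + 1) ^ δ := by
    have hlt : (8 * K ^ 2 * C₃) ^ δ⁻¹ < (N:ℝ) + 1 := by
      have : (m:ℝ) ≤ (N:ℝ) := by exact_mod_cast Nat.le_succ m
      linarith
    calc 8 * K ^ 2 * C₃ = ((8 * K ^ 2 * C₃) ^ δ⁻¹) ^ δ := by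
          rw [← Real.rpow_mul hX0, inv_mul_cancel₀ (ne_of_gt hδ0), Real.rpow_one]
      _ ≤ ((N:ℝ) + 1) ^ δ :=
          Real.rpow_le_rpow (Real.rpow_nonneg hX0 _) hlt.le hδ0.le
  have hpowδ : (0:ℝ) < ((N:ℝ) + 1) ^ δ := Real.rpow_pos_of_pos hNp1 δ
  have hE : 4 * K ^ 2 * C₃ * (((N:ℝ) + 1) ^ (1 - δ)) ≤ (N:ℝ) := by
    have hrw : ((N:ℝ) + 1) ^ (1 - δ) = ((N:ℝ) + 1) / ((N:ℝ) + 1) ^ δ := by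
      rw [Real.rpow_sub hNp1, Real.rpow_one]
    rw [hrw, ← mul_div_assoc, div_le_iff₀ hpowδ]
    have g1 : (N:ℝ) * (8 * K ^ 2 * C₃) ≤ (N:ℝ) * ((N:ℝ) + 1) ^ δ :=
      mul_le_mul_of_nonneg_left h8 (by linarith)
    nlinarith [mul_nonneg (mul_nonneg (pow_pos hK0 2).le hC₃0.le) (sub_nonneg.mpr hNR)]
  -- Step 6: fixed-step contraction
  have hhalf : ∀ ℓ, a (ℓ + N) ≤ 1 / 2 * a ℓ := by
    intro ℓ
    obtain ⟨n₀, hn₀mem, hn₀min⟩ :=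
      Finset.exists_min_image (Finset.Icc 1 N) (fun n => (a (ℓ + n)) ^ 2)
        ⟨1, Finset.mem_Icc.mpr ⟨le_refl 1, hN1⟩⟩
    rw [Finset.mem_Icc] at hn₀mem
    have hcard : (Finset.Icc 1 N).card = N := by rw [Nat.card_Icc]; omega
    have hmin_sum : (N:ℝ) * (a (ℓ + n₀)) ^ 2 ≤ ∑ n ∈ Finset.Icc 1 N, (a (ℓ + n)) ^ 2 := by
      have h := Finset.card_nsmul_le_sum (Finset.Icc 1 N) (fun n => (a (ℓ + n)) ^ 2)
        ((a (ℓ + n₀)) ^ 2) (fun i hi => hn₀min i hi)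
      rwa [hcard, nsmul_eq_mul] at h
    have hsub : ∑ n ∈ Finset.Icc 1 N, (a (ℓ + n)) ^ 2
        ≤ ∑ n ∈ Finset.range (N + 1), (a (ℓ + n)) ^ 2 := by
      apply Finset.sum_le_sum_of_subset_of_nonneg
      · intro x hx
        rw [Finset.mem_Icc] at hx
        rw [Finset.mem_range]
        omega
      · intro i _ _
        exact sq_nonneg _
    have hR := hsum ℓ N
    have hNn : a (ℓ + N) ≤ K * a (ℓ + n₀) := by
      have heq : ℓ + N = (ℓ + n₀) + (N - n₀) := by omega
      rw [heq]
      exact hbound (ℓ + n₀) (N - n₀)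
    have hsq2 : (a (ℓ + N)) ^ 2 ≤ K ^ 2 * (a (ℓ + n₀)) ^ 2 := by
      calc (a (ℓ + N)) ^ 2 ≤ (K * a (ℓ + n₀)) ^ 2 := pow_le_pow_left₀ (ha _) hNn 2
        _ = K ^ 2 * (a (ℓ + n₀)) ^ 2 := mul_pow K _ 2
    have hfinal : (a (ℓ + N)) ^ 2 ≤ (1 / 2 * a ℓ) ^ 2 := by
      rw [mul_pow, ← mul_le_mul_iff_right₀ hNpos]
      calc (N:ℝ) * (a (ℓ + N)) ^ 2
          ≤ (N:ℝ) * (K ^ 2 * (a (ℓ + n₀)) ^ 2) := mul_le_mul_of_nonneg_left hsq2 hNpos.le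
        _ = K ^ 2 * ((N:ℝ) * (a (ℓ + n₀)) ^ 2) := by ring
        _ ≤ K ^ 2 * (C₃ * ((N:ℝ) + 1) ^ (1 - δ) * (a ℓ) ^ 2) :=
            mul_le_mul_of_nonneg_left (hmin_sum.trans (hsub.trans hR)) (by positivity)
        _ = (4 * K ^ 2 * C₃ * (((N:ℝ) + 1) ^ (1 - δ)) * (a ℓ) ^ 2) / 4 := by ring
        _ ≤ ((N:ℝ) * (a ℓ) ^ 2) / 4 := by
            have hEa := mul_le_mul_of_nonneg_right hE (sq_nonneg (a ℓ))
            gcongr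
        _ = (N:ℝ) * ((1 / 2) ^ 2 * (a ℓ) ^ 2) := by ring
    exact le_of_pow_le_pow_left₀ (by norm_num) (by linarith [ha ℓ]) hfinal
  -- Step 7: assembly
  have hpowk : ∀ ℓ k : ℕ, a (ℓ + k * N) ≤ (1 / 2 : ℝ) ^ k * a ℓ := by
    intro ℓ k
    induction k with
    | zero => simp
    | succ k ih =>
      have heq : ℓ + (k + 1) * N = (ℓ + k * N) + N := by ring
      rw [heq]
      calc a ((ℓ + k * N) + N) ≤ 1 / 2 * a (ℓ + k * N) := hhalf _
        _ ≤ 1 / 2 * ((1 / 2 : ℝ) ^ k * a ℓ) := by linarith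
        _ = (1 / 2 : ℝ) ^ (k + 1) * a ℓ := by ring
  refine ⟨2 * K, (1 / 2 : ℝ) ^ ((N:ℝ)⁻¹), by positivity,
    Real.rpow_pos_of_pos (by norm_num) _,
    Real.rpow_lt_one (by norm_num) (by norm_num) (inv_pos.mpr hNpos), ?_⟩
  intro ℓ n
  set k := n / N with hk
  have hk1 : k * N ≤ n := Nat.div_mul_le_self n N
  have hk2 : n < (k + 1) * N := by
    have hdm : N * k + n % N = n := Nat.div_add_mod n N
    have hml : n % N < N := Nat.mod_lt _ (by omega)
    calc n = N * k + n % N := hdm.symm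
      _ < N * k + N := by omega
      _ = (k + 1) * N := by ring
  have heq : ℓ + n = (ℓ + k * N) + (n - k * N) := by omega
  have hstep1 : a (ℓ + n) ≤ K * a (ℓ + k * N) := by
    rw [heq]
    exact hbound _ _
  have hstep2 : a (ℓ + n) ≤ K * ((1 / 2 : ℝ) ^ k * a ℓ) :=
    hstep1.trans (mul_le_mul_of_nonneg_left (hpowk ℓ k) hK0.le)
  have hqlin : ((1:ℝ) / 2) ^ k ≤ 2 * ((1 / 2 : ℝ) ^ ((N:ℝ)⁻¹)) ^ n := by
    have hrw : ((1 / 2 : ℝ) ^ ((N:ℝ)⁻¹)) ^ n = (1 / 2 : ℝ) ^ ((N:ℝ)⁻¹ * n) := by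
      rw [← Real.rpow_natCast ((1 / 2 : ℝ) ^ ((N:ℝ)⁻¹)) n, ← Real.rpow_mul (by norm_num)]
    rw [hrw]
    have hcastlt : (n:ℝ) < ((k:ℝ) + 1) * (N:ℝ) := by exact_mod_cast hk2
    have hexp : (N:ℝ)⁻¹ * n ≤ (k:ℝ) + 1 := by
      rw [inv_mul_le_iff₀ hNpos]
      linarith
    have hmono : (1 / 2 : ℝ) ^ ((k:ℝ) + 1) ≤ (1 / 2 : ℝ) ^ ((N:ℝ)⁻¹ * n) :=
      Real.rpow_le_rpow_of_exponent_ge (by norm_num) (by norm_num) hexp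
    have hcast : (1 / 2 : ℝ) ^ ((k:ℝ) + 1) = (1 / 2 : ℝ) ^ (k + 1 : ℕ) := by
      rw [← Real.rpow_natCast (1 / 2 : ℝ) (k + 1)]
      push_cast
      ring_nf
    have hps : ((1:ℝ) / 2) ^ k = 2 * (1 / 2 : ℝ) ^ (k + 1 : ℕ) := by
      rw [pow_succ]
      ring
    rw [hps]
    rw [hcast] at hmono
    linarith
  calc a (ℓ + n) ≤ K * ((1 / 2 : ℝ) ^ k * a ℓ) := hstep2
    _ ≤ K * ((2 * ((1 / 2 : ℝ) ^ ((N:ℝ)⁻¹)) ^ n) * a ℓ) :=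
        mul_le_mul_of_nonneg_left (mul_le_mul_of_nonneg_right hqlin (ha ℓ)) hK0.le
    _ = 2 * K * ((1 / 2 : ℝ) ^ ((N:ℝ)⁻¹)) ^ n * a ℓ := by ring
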